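/- Let A and B be associative rings with identity, f : A → B a ring homomorphism, and J a proper two-sided ideal of B. Assume J ⊆ nil(B), i.e., every element of J is nilpotent. Then the amalgamation A⋈fJ is a weak Armendariz ring if and only if A is a weak Armendariz ring. -/

import Mathlib

open Polynomial

/-- A ring `R` is Armendariz if whenever `p * q = 0` for polynomials over `R`,
every product of a coefficient of `p` with a coefficient of `q` is zero. -/
def IsArmendariz (R : Type*) [Ring R] : Prop :=
  ∀ p q : R[X], p * q = 0 → ∀ i j : ℕ, p.coeff i * q.coeff j = 0

/-- A ring `R` is nil-Armendariz if whenever every coefficient of `p * q` is nilpotent,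
every product of a coefficient of `p` with a coefficient of `q` is nilpotent. -/
def IsNilArmendariz (R : Type*) [Ring R] : Prop :=
  ∀ p q : R[X], (∀ k : ℕ, IsNilpotent ((p * q).coeff k)) →
    ∀ i j : ℕ, IsNilpotent (p.coeff i * q.coeff j)

/-- A ring `R` is weak Armendariz if whenever `p * q = 0` for polynomials over `R`,
every product of a coefficient of `p` with a coefficient of `q` is nilpotent. -/
def IsWeakArmendariz (R : Type*) [Ring R] : Prop :=
  ∀ p q : R[X], p * q = 0 → ∀ i j : ℕ, IsNilpotent (p.coeff i * q.coeff j)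

/-- The amalgamation `A ⋈^f J = {(a, f a + j) | a ∈ A, j ∈ J}` of `A` and `B` along the
two-sided ideal `J` with respect to `f`, as a subring of `A × B`.  (A pair `(a, b)` has the
form `(a, f a + j)` with `j ∈ J` iff `b - f a ∈ J`.) -/
def amalgamation {A B : Type*} [Ring A] [Ring B] (f : A →+* B) (J : TwoSidedIdeal B) :
    Subring (A × B) where
  carrier := {p | p.2 - f p.1 ∈ J}
  zero_mem' := by simp [J.zero_mem]
  one_mem' := by simp [J.zero_mem]
  add_mem' := by
    intro x y hx hy
    have e : (x + y).2 - f ((x + y).1) = (x.2 - f x.1) + (y.2 - f y.1) := by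
      simp only [Prod.snd_add, Prod.fst_add, map_add]; abel
    show (x + y).2 - f ((x + y).1) ∈ J
    rw [e]; exact J.add_mem hx hy
  neg_mem' := by
    intro x hx
    have e : (-x).2 - f ((-x).1) = -(x.2 - f x.1) := by
      simp only [Prod.snd_neg, Prod.fst_neg, map_neg]; abel
    show (-x).2 - f ((-x).1) ∈ J
    rw [e]; exact J.neg_mem hx
  mul_mem' := by
    intro x y hx hy
    have e : (x * y).2 - f ((x * y).1) = x.2 * (y.2 - f y.1) + (x.2 - f x.1) * f y.1 := by
      simp only [Prod.snd_mul, Prod.fst_mul, map_mul, mul_sub, sub_mul]; abel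
    show (x * y).2 - f ((x * y).1) ∈ J
    rw [e]; exact J.add_mem (J.mul_mem_left _ _ hy) (J.mul_mem_right _ _ hx)

/-- The subring `f(A) + J = {f a + j | a ∈ A, j ∈ J}` of `B`.  (An element `b` has the form
`f a + j` with `j ∈ J` iff `b - f a ∈ J` for some `a`.) -/
def imageAddIdeal {A B : Type*} [Ring A] [Ring B] (f : A →+* B) (J : TwoSidedIdeal B) :
    Subring B where
  carrier := {b | ∃ a : A, b - f a ∈ J}
  zero_mem' := ⟨0, by simp [J.zero_mem]⟩
  one_mem' := ⟨1, by simp [J.zero_mem]⟩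
  add_mem' := by
    rintro x y ⟨a, ha⟩ ⟨b, hb⟩
    refine ⟨a + b, ?_⟩
    have e : x + y - f (a + b) = (x - f a) + (y - f b) := by
      rw [map_add]; abel
    rw [e]; exact J.add_mem ha hb
  neg_mem' := by
    rintro x ⟨a, ha⟩
    refine ⟨-a, ?_⟩
    have e : -x - f (-a) = -(x - f a) := by rw [map_neg]; abel
    rw [e]; exact J.neg_mem ha
  mul_mem' := by
    rintro x y ⟨a, ha⟩ ⟨b, hb⟩
    refine ⟨a * b, ?_⟩
    have e : x * y - f (a * b) = x * (y - f b) + (x - f a) * f b := by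
      rw [map_mul, mul_sub, sub_mul]; abel
    rw [e]; exact J.add_mem (J.mul_mem_left _ _ hb) (J.mul_mem_right _ _ ha)

private lemma nil_add_mem {B : Type*} [Ring B] (J : TwoSidedIdeal B)
    (h : ∀ b ∈ J, IsNilpotent b) {x n : B} (hx : IsNilpotent x) (hn : n ∈ J) :
    IsNilpotent (x + n) := by
  obtain ⟨k, hk⟩ := hx
  have key : ∀ m : ℕ, (x + n) ^ m - x ^ m ∈ J := by
    intro m
    induction m with
    | zero => simp [J.zero_mem]
    | succ m ih =>
      have e : (x + n) ^ (m + 1) - x ^ (m + 1) =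
          ((x + n) ^ m - x ^ m) * (x + n) + x ^ m * n := by
        rw [pow_succ, pow_succ]; noncomm_ring
      rw [e]
      exact J.add_mem (J.mul_mem_right _ _ ih) (J.mul_mem_left _ _ hn)
  have hk' : (x + n) ^ k ∈ J := by simpa [hk] using key k
  obtain ⟨m, hm⟩ := h _ hk'
  exact ⟨k * m, by rw [pow_mul, hm]⟩

theorem stmt_15 {A B : Type*} [Ring A] [Ring B] (f : A →+* B) (J : TwoSidedIdeal B)
    (hJ : (1 : B) ∉ J)
    (h : ∀ b ∈ J, IsNilpotent b) :
    IsWeakArmendariz (amalgamation f J) ↔ IsWeakArmendariz A := by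
  set R := amalgamation f J
  -- inclusion A →+* R
  have hmem : ∀ a : A, ((a, f a) : A × B) ∈ R := by
    intro a; show f a - f a ∈ J; simp [J.zero_mem]
  let ι : A →+* R := RingHom.codRestrict ((RingHom.id A).prod f) R hmem
  let π : R →+* A := (RingHom.fst A B).comp R.subtype
  let σ : R →+* B := (RingHom.snd A B).comp R.subtype
  have hπι : ∀ a : A, π (ι a) = a := fun a => rfl
  constructor
  · -- R weak Armendariz → A weak Armendariz
    intro hR p q hpq i j
    have hPQ : p.map ι * q.map ι = 0 := by
      rw [← Polynomial.map_mul, hpq, Polynomial.map_zero]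
    have := hR (p.map ι) (q.map ι) hPQ i j
    rw [Polynomial.coeff_map, Polynomial.coeff_map, ← map_mul] at this
    have := this.map π
    rwa [hπι] at this
  · -- A weak Armendariz → R weak Armendariz
    intro hA P Q hPQ i j
    set x := P.coeff i
    set y := Q.coeff j
    -- first components
    have hpq1 : P.map π * Q.map π = 0 := by
      rw [← Polynomial.map_mul, hPQ, Polynomial.map_zero]
    have h1 : IsNilpotent (π x * π y) := by
      have := hA (P.map π) (Q.map π) hpq1 i j
      rwa [Polynomial.coeff_map, Polynomial.coeff_map] at this
    -- second components
    have hx : σ x - f (π x) ∈ J := x.2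
    have hy : σ y - f (π y) ∈ J := y.2
    have hdiff : σ x * σ y - f (π x * π y) ∈ J := by
      have e : σ x * σ y - f (π x * π y) =
          σ x * (σ y - f (π y)) + (σ x - f (π x)) * f (π y) := by
        rw [map_mul]; noncomm_ring
      rw [e]
      exact J.add_mem (J.mul_mem_left _ _ hy) (J.mul_mem_right _ _ hx)
    have h2 : IsNilpotent (σ x * σ y) := by
      have := nil_add_mem J h (h1.map f) hdiff
      simpa using this
    -- combine into A × B, then descend to R
    obtain ⟨m, hm⟩ := h1
    obtain ⟨n, hn⟩ := h2
    refine ⟨m + n, ?_⟩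
    have hfst : (π (x * y)) ^ (m + n) = 0 := by
      rw [map_mul, pow_add, hm, zero_mul]
    have hsnd : (σ (x * y)) ^ (m + n) = 0 := by
      rw [map_mul, pow_add, hn, mul_zero]
    have key : ((x * y : R) : A × B) ^ (m + n) = 0 := by
      ext
      · simpa [π] using hfst
      · simpa [σ] using hsnd
    exact Subtype.ext (by push_cast at key ⊢; exact key)
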